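/- Let P_1, ..., P_m be simple directed paths over a vertex set V such that: (1) each path has length at least one; (2) for each i < m, the ending vertex of P_i equals the starting vertex of P_{i+1}; (3) the starting vertex of P_1 differs from the ending vertex of P_m; and (4) if (u,v) is an edge of P_i, then neither (u,v) nor (v,u) is an edge of P_j for any j ≠ i. Then the directed graph G = (V, ∪_{i=1}^m P_i) is a generalized PPAD graph: it has exactly one vertex with out-degree equal to in-degree plus one (the start of P_1), exactly one vertex with in-degree equal to out-degree plus one (the end of P_m), every other vertex has equal in-degree and out-degree, and whenever (u,v) is an edge, (v,u) is not an edge. -/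

import Mathlib

private lemma aux_cfst {V : Type*} [DecidableEq V] (L : List V) (v : V) :
    (L.zip L.tail).countP (fun e => decide (e.1 = v)) = L.dropLast.count v := by
  induction L with
  | nil => rfl
  | cons a l ih =>
    cases l with
    | nil => rfl
    | cons b t =>
      simp only [List.tail_cons] at ih ⊢
      rw [List.zip_cons_cons, List.countP_cons, ih]
      show List.count v (b :: t).dropLast + _ = List.count v ((a :: b :: t).dropLast)
      have : (a :: b :: t).dropLast = a :: (b :: t).dropLast := rfl
      rw [this, List.count_cons]
      by_cases h : a = v <;> simp [h]

private lemma aux_csnd {V : Type*} [DecidableEq V] (L : List V) (v : V) :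
    (L.zip L.tail).countP (fun e => decide (e.2 = v)) = L.tail.count v := by
  induction L with
  | nil => rfl
  | cons a l ih =>
    cases l with
    | nil => rfl
    | cons b t =>
      simp only [List.tail_cons] at ih ⊢
      rw [List.zip_cons_cons, List.countP_cons, ih]
      show List.count v t + _ = List.count v (b :: t)
      rw [List.count_cons]
      by_cases h : b = v <;> simp [h]

private lemma aux_mem_dropLast_iff {V : Type*} {L : List V} (hnd : L.Nodup) {v : V} :
    v ∈ L.dropLast ↔ v ∈ L ∧ L.getLast? ≠ some v := by
  cases h : L.reverse with
  | nil => simp [List.reverse_eq_nil_iff.mp h]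
  | cons a t =>
    have hL : L = t.reverse ++ [a] := by
      have := congrArg List.reverse h; simpa using this
    subst hL
    have hnd' : a ∉ t.reverse := by
      simp [List.nodup_append] at hnd
      simp only [List.mem_reverse]; tauto
    simp [List.dropLast_append_of_ne_nil, List.getLast?_append, List.mem_append]
    constructor
    · intro hv
      refine ⟨Or.inl hv, ?_⟩
      rintro rfl; exact hnd' (by simpa using hv)
    · rintro ⟨h1 | h2, h3⟩
      · exact h1
      · exact absurd h2.symm h3

private lemma aux_mem_tail_iff {V : Type*} {L : List V} (hnd : L.Nodup) {v : V} :
    v ∈ L.tail ↔ v ∈ L ∧ L.head? ≠ some v := by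
  cases L with
  | nil => simp
  | cons a t =>
    simp only [List.nodup_cons] at hnd
    simp only [List.tail_cons, List.head?_cons, List.mem_cons, Ne, Option.some_inj]
    constructor
    · intro hv
      exact ⟨Or.inr hv, fun h => hnd.1 (h ▸ hv)⟩
    · rintro ⟨h1 | h2, h3⟩
      · exact absurd h1.symm h3
      · exact h2

private lemma aux_path_balance {V : Type*} [DecidableEq V] {L : List V} (hnd : L.Nodup) (v : V) :
    (L.zip L.tail).countP (fun e => decide (e.1 = v)) + (if L.getLast? = some v then 1 else 0)
      = (L.zip L.tail).countP (fun e => decide (e.2 = v)) + (if L.head? = some v then 1 else 0) := by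
  rw [aux_cfst, aux_csnd, List.Nodup.count ((L.dropLast_sublist).nodup hnd),
    List.Nodup.count ((L.tail_sublist).nodup hnd)]
  by_cases hmem : v ∈ L
  · by_cases hlast : L.getLast? = some v <;> by_cases hhead : L.head? = some v <;>
      simp [aux_mem_dropLast_iff hnd, aux_mem_tail_iff hnd, hmem, hlast, hhead]
  · have h1 : L.getLast? ≠ some v := fun h => hmem (List.mem_of_mem_getLast? h)
    have h2 : L.head? ≠ some v := fun h => hmem (List.mem_of_mem_head? h)
    simp [aux_mem_dropLast_iff hnd, aux_mem_tail_iff hnd, hmem, h1, h2]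

private lemma aux_path_antisym {V : Type*} {L : List V} (hnd : L.Nodup) {u v : V}
    (h1 : (u, v) ∈ L.zip L.tail) (h2 : (v, u) ∈ L.zip L.tail) : False := by
  have hz : ∀ {a b : V}, (a, b) ∈ L.zip L.tail →
      ∃ i, L[i]? = some a ∧ L[i+1]? = some b := by
    intro a b h
    obtain ⟨i, hi, he⟩ := List.getElem_of_mem h
    simp only [List.length_zip, lt_min_iff, List.length_tail] at hi
    rw [List.getElem_zip] at he
    refine ⟨i, ?_, ?_⟩
    · rw [List.getElem?_eq_getElem (by omega)]
      exact congrArg some (congrArg Prod.fst he)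
    · rw [List.getElem?_eq_getElem (by omega)]
      have := congrArg Prod.snd he
      simp only at this
      rw [← this, List.getElem_tail]
  obtain ⟨i, hi1, hi2⟩ := hz h1
  obtain ⟨j, hj1, hj2⟩ := hz h2
  have hilen : i < L.length := by
    by_contra h; push_neg at h
    rw [List.getElem?_eq_none (by omega)] at hi1; simp at hi1
  have hjlen : j < L.length := by
    by_contra h; push_neg at h
    rw [List.getElem?_eq_none (by omega)] at hj1; simp at hj1
  have e1 : i = j + 1 := (List.getElem?_inj hilen hnd).mp (hi1.trans hj2.symm)
  have e2 : j = i + 1 := (List.getElem?_inj hjlen hnd).mp (hj1.trans hi2.symm)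
  omega

/-- Path Union: the union of edge-disjoint simple directed paths chained end to
end, with distinct overall endpoints, is a generalized PPAD graph. -/
theorem stmt1 {V : Type*} [DecidableEq V] (m : ℕ) (hm : 0 < m) (P : Fin m → List V)
    (hsimple : ∀ i, (P i).Nodup)
    (hlen : ∀ i, 2 ≤ (P i).length)
    (hconn : ∀ i : Fin m, ∀ h : i.val + 1 < m,
      (P i).getLast? = (P ⟨i.val + 1, h⟩).head?)
    (hends : (P ⟨0, hm⟩).head? ≠ (P ⟨m - 1, by omega⟩).getLast?)
    (hdisj : ∀ i j : Fin m, i ≠ j → ∀ u v : V,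
      (u, v) ∈ (P i).zip (P i).tail →
      (u, v) ∉ (P j).zip (P j).tail ∧ (v, u) ∉ (P j).zip (P j).tail) :
    let E := (List.ofFn fun i => (P i).zip (P i).tail).flatten
    let outdeg := fun v => E.countP fun e => decide (e.1 = v)
    let indeg := fun v => E.countP fun e => decide (e.2 = v)
    (∀ v, outdeg v = indeg v + 1 ↔ (P ⟨0, hm⟩).head? = some v) ∧
    (∀ v, indeg v = outdeg v + 1 ↔ (P ⟨m - 1, by omega⟩).getLast? = some v) ∧
    (∀ v, (P ⟨0, hm⟩).head? ≠ some v → (P ⟨m - 1, by omega⟩).getLast? ≠ some v →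
      indeg v = outdeg v) ∧
    (∀ u v, (u, v) ∈ E → (v, u) ∉ E) := by
  intro E outdeg indeg
  obtain ⟨n, rfl⟩ : ∃ n, m = n + 1 := ⟨m - 1, by omega⟩
  simp only [Nat.add_sub_cancel] at hends ⊢
  have hlast : (⟨n, by omega⟩ : Fin (n + 1)) = Fin.last n := rfl
  have h0 : (⟨0, hm⟩ : Fin (n+1)) = 0 := rfl
  simp only [hlast, h0] at hends ⊢
  have hdeg : ∀ v : V, outdeg v + (if (P (Fin.last n)).getLast? = some v then 1 else 0)
      = indeg v + (if (P 0).head? = some v then 1 else 0) := by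
    intro v
    have hout : outdeg v
        = ∑ i : Fin (n+1), ((P i).zip (P i).tail).countP (fun e => decide (e.1 = v)) := by
      simp only [outdeg, E, List.countP_flatten, List.map_ofFn, List.sum_ofFn]; rfl
    have hin : indeg v
        = ∑ i : Fin (n+1), ((P i).zip (P i).tail).countP (fun e => decide (e.2 = v)) := by
      simp only [indeg, E, List.countP_flatten, List.map_ofFn, List.sum_ofFn]; rfl
    have e1 : ∑ i : Fin (n+1), (((P i).zip (P i).tail).countP (fun e => decide (e.1 = v))
          + (if (P i).getLast? = some v then 1 else 0))
        = ∑ i : Fin (n+1), (((P i).zip (P i).tail).countP (fun e => decide (e.2 = v))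
          + (if (P i).head? = some v then 1 else 0)) :=
      Finset.sum_congr rfl (fun i _ => aux_path_balance (hsimple i) v)
    rw [Finset.sum_add_distrib, Finset.sum_add_distrib] at e1
    have eB : ∑ i : Fin (n+1), (if (P i).getLast? = some v then (1:ℕ) else 0)
        = ∑ i : Fin n, (if (P i.castSucc).getLast? = some v then (1:ℕ) else 0)
          + (if (P (Fin.last n)).getLast? = some v then 1 else 0) :=
      Fin.sum_univ_castSucc _
    have eA : ∑ i : Fin (n+1), (if (P i).head? = some v then (1:ℕ) else 0)
        = (if (P 0).head? = some v then 1 else 0)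
          + ∑ i : Fin n, (if (P i.succ).head? = some v then (1:ℕ) else 0) :=
      Fin.sum_univ_succ _
    have eAB : ∀ i : Fin n, (if (P i.castSucc).getLast? = some v then (1:ℕ) else 0)
        = (if (P i.succ).head? = some v then (1:ℕ) else 0) := by
      intro i
      have hi := i.isLt
      have h : (i.castSucc : Fin (n+1)).val + 1 < n + 1 := by
        rw [Fin.coe_castSucc]; omega
      rw [hconn i.castSucc h]
      rfl
    rw [Finset.sum_congr rfl (fun i _ => eAB i)] at eB
    rw [hout, hin]
    omega
  refine ⟨?_, ?_, ?_, ?_⟩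
  · intro v
    have h := hdeg v
    constructor
    · intro h1
      by_cases hh : (P 0).head? = some v
      · exact hh
      · exfalso
        by_cases hl : (P (Fin.last n)).getLast? = some v <;> simp [hh, hl] at h <;> omega
    · intro hh
      have hl : (P (Fin.last n)).getLast? ≠ some v := fun hl => hends (hh.trans hl.symm)
      simp [hh, hl] at h
      omega
  · intro v
    have h := hdeg v
    constructor
    · intro h1
      by_cases hl : (P (Fin.last n)).getLast? = some v
      · exact hl
      · exfalso
        by_cases hh : (P 0).head? = some v <;> simp [hh, hl] at h <;> omega
    · intro hl
      have hh : (P 0).head? ≠ some v := fun hh => hends (hh.trans hl.symm)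
      simp [hh, hl] at h
      omega
  · intro v hh hl
    have h := hdeg v
    simp [hh, hl] at h
    omega
  · intro u v hu hv
    simp only [E, List.mem_flatten, List.mem_ofFn, Set.mem_range] at hu hv
    obtain ⟨lu, ⟨i, rfl⟩, hu⟩ := hu
    obtain ⟨lv, ⟨j, rfl⟩, hv⟩ := hv
    by_cases hij : i = j
    · subst hij
      exact aux_path_antisym (hsimple i) hu hv
    · exact (hdisj i j hij u v hu).2 hv
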